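/- arXiv:2605.07696 — 4 statements merged into one kernel-verified Lean document; each statement's English description precedes it below -/
import Mathlib

section
/- Let (X,d) be a metric space equipped with a Borel measure μ, let Γ be a countable group acting on X by measure-preserving isometries, and let 𝒟 ⊆ X be a measurable fundamental domain for the action. Let K : X × X → ℝ be measurable and Γ-invariant under the diagonal action, i.e. K(γ·z, γ·w) = K(z, w) for all γ ∈ Γ. Fix r > 0 and a function χ : [0,∞) → [0,1] with χ(x) = 0 whenever x > 1, and define the truncated periodised kernel K^{Γ,r}(z,w) = Σ_{γ∈Γ} K(z, γ·w) · χ(d(z, γ·w)/r). Suppose 𝒟 is partitioned into measurable sets D₁ and D₂ such that: (i) for every z ∈ D₁ and every w ∈ X there is at most one γ ∈ Γ with d(z, γ·w) ≤ r; (ii) for every z ∈ D₂ and every w ∈ X, the number of γ ∈ Γ with d(z, γ·w) ≤ r is at most N; and (iii) μ(B(z,r)) ≤ V for every z ∈ D₂, where B(z,r) is the closed ball of radius r. Then ∫_𝒟 ∫_𝒟 |K^{Γ,r}(z,w)|² dμ(w) dμ(z) ≤ ∫_𝒟 ∫_X |K(z,w)|² dμ(w) dμ(z) + N · V · μ(D₂)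 · sup_{(z,w) ∈ 𝒟 × X} |K(z,w)|². -/
open MeasureTheory
open scoped ENNReal NNReal

private lemma pointP {Γ : Type*} [Countable Γ] (a : Γ → ℝ) (t : Finset Γ)
    (h0 : ∀ γ ∉ t, a γ = 0) :
    ENNReal.ofReal ((∑' γ, a γ) ^ 2)
      ≤ (t.card : ℝ≥0∞) * ∑' γ, ENNReal.ofReal ((a γ) ^ 2) := by
  rw [tsum_eq_sum h0]
  calc ENNReal.ofReal ((∑ γ ∈ t, a γ) ^ 2)
      ≤ ENNReal.ofReal ((t.card : ℝ) * ∑ γ ∈ t, a γ ^ 2) :=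
        ENNReal.ofReal_le_ofReal sq_sum_le_card_mul_sum_sq
    _ = (t.card : ℝ≥0∞) * ENNReal.ofReal (∑ γ ∈ t, a γ ^ 2) := by
        rw [ENNReal.ofReal_mul (by positivity), ENNReal.ofReal_natCast]
    _ ≤ (t.card : ℝ≥0∞) * ∑' γ, ENNReal.ofReal (a γ ^ 2) := by
        refine mul_le_mul_right ?_ _
        rw [ENNReal.ofReal_sum_of_nonneg (fun _ _ => sq_nonneg _)]
        exact Summable.sum_le_tsum t (fun _ _ => zero_le) ENNReal.summable

/-- Hilbert–Schmidt bound for the truncated periodised kernel over a fundamental domain. -/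
theorem stmt_0
    {X : Type*} [MetricSpace X] [MeasurableSpace X] [BorelSpace X]
    (μ : Measure X)
    {Γ : Type*} [Group Γ] [Countable Γ] [MulAction Γ X]
    (hiso : ∀ γ : Γ, Isometry (fun x : X => γ • x))
    (hmp : ∀ γ : Γ, MeasurePreserving (fun x : X => γ • x) μ μ)
    (𝒟 : Set X) (h𝒟 : MeasurableSet 𝒟)
    (hfund : IsFundamentalDomain Γ 𝒟 μ)
    (K : X → X → ℝ) (hK : Measurable (fun p : X × X => K p.1 p.2))
    (hKinv : ∀ (γ : Γ) (z w : X), K (γ • z) (γ • w) = K z w)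
    (r : ℝ) (hr : 0 < r)
    (χ : ℝ → ℝ) (hχ0 : ∀ x, 0 ≤ χ x) (hχ1 : ∀ x, χ x ≤ 1)
    (hχsupp : ∀ x, 1 < x → χ x = 0)
    (D₁ D₂ : Set X) (hD₁ : MeasurableSet D₁) (hD₂ : MeasurableSet D₂)
    (hunion : D₁ ∪ D₂ = 𝒟) (hdisj : Disjoint D₁ D₂)
    (N : ℕ) (V : ℝ≥0∞)
    (hone : ∀ z ∈ D₁, ∀ w : X, ({γ : Γ | dist z (γ • w) ≤ r}).Subsingleton)
    (hN : ∀ z ∈ D₂, ∀ w : X, ({γ : Γ | dist z (γ • w) ≤ r}).encard ≤ (N : ℕ∞))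
    (hV : ∀ z ∈ D₂, μ (Metric.closedBall z r) ≤ V) :
    ∫⁻ z in 𝒟, ∫⁻ w in 𝒟,
        ENNReal.ofReal ((∑' γ : Γ, K z (γ • w) * χ (dist z (γ • w) / r)) ^ 2) ∂μ ∂μ
      ≤ (∫⁻ z in 𝒟, ∫⁻ w, ENNReal.ofReal ((K z w) ^ 2) ∂μ ∂μ)
        + (N : ℝ≥0∞) * V * μ D₂ * ⨆ z ∈ 𝒟, ⨆ w : X, ENNReal.ofReal ((K z w) ^ 2) := by
  classical
  letI : MeasurableSpace Γ := ⊤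
  haveI : MeasurableSMul Γ X :=
    { measurable_const_smul := fun γ => (hiso γ).continuous.measurable, measurable_smul_const := fun _ => measurable_from_top }
  haveI : SMulInvariantMeasure Γ X μ :=
    ⟨fun γ s hs => (hmp γ).measure_preimage hs.nullMeasurableSet⟩
  set S := ⨆ z ∈ 𝒟, ⨆ w : X, ENNReal.ofReal ((K z w) ^ 2) with hSdef
  set g : X → X → ℝ≥0∞ := fun z w => ENNReal.ofReal ((K z w) ^ 2) *
      (Metric.closedBall z r).indicator 1 w with hgdef
  have hKz : ∀ z, Measurable fun w => K z w := fun z => hK.comp measurable_prodMk_left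
  have hgz : ∀ z, Measurable (g z) := fun z =>
    (((hKz z).pow_const 2).ennreal_ofReal).mul
      (measurable_const.indicator measurableSet_closedBall)
  -- pointwise key bound
  have key : ∀ (z w : X) (c : ℝ≥0∞) (hfin : ({γ : Γ | dist z (γ • w) ≤ r}).Finite),
      (hfin.toFinset.card : ℝ≥0∞) ≤ c →
      ENNReal.ofReal ((∑' γ : Γ, K z (γ • w) * χ (dist z (γ • w) / r)) ^ 2)
        ≤ c * ∑' γ : Γ, g z (γ • w) := by
    intro z w c hfin hcard
    have h0 : ∀ γ ∉ hfin.toFinset, K z (γ • w) * χ (dist z (γ • w) / r) = 0 := by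
      intro γ hγ
      have hd : ¬ dist z (γ • w) ≤ r := by simpa using hγ
      rw [hχsupp _ ((one_lt_div hr).2 (not_le.1 hd)), mul_zero]
    refine (pointP _ hfin.toFinset h0).trans (mul_le_mul' hcard (ENNReal.tsum_le_tsum fun γ => ?_))
    by_cases hd : dist z (γ • w) ≤ r
    · have hb : (K z (γ • w) * χ (dist z (γ • w) / r)) ^ 2 ≤ K z (γ • w) ^ 2 := by
        rw [mul_pow]
        exact mul_le_of_le_one_right (sq_nonneg _) (pow_le_one₀ (hχ0 _) (hχ1 _))
      calc ENNReal.ofReal ((K z (γ • w) * χ (dist z (γ • w) / r)) ^ 2)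
          ≤ ENNReal.ofReal (K z (γ • w) ^ 2) := ENNReal.ofReal_le_ofReal hb
        _ = g z (γ • w) := by
            simp [hgdef, Set.indicator_of_mem (Metric.mem_closedBall'.2 hd)]
    · have : χ (dist z (γ • w) / r) = 0 := hχsupp _ ((one_lt_div hr).2 (not_le.1 hd))
      simp [this]
  -- unfolding over the fundamental domain
  have unfold : ∀ z, ∫⁻ w in 𝒟, ∑' γ : Γ, g z (γ • w) ∂μ = ∫⁻ w, g z w ∂μ := by
    intro z
    rw [lintegral_tsum (f := fun (γ : Γ) (w : X) => g z (γ • w)) fun γ =>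
      ((hgz z).comp (hiso γ).continuous.measurable).aemeasurable]
    exact (hfund.lintegral_eq_tsum'' (g z)).symm
  -- claim on D₁
  have claim1 : ∀ z ∈ D₁,
      (∫⁻ w in 𝒟, ENNReal.ofReal
        ((∑' γ : Γ, K z (γ • w) * χ (dist z (γ • w) / r)) ^ 2) ∂μ)
        ≤ ∫⁻ w, ENNReal.ofReal ((K z w) ^ 2) ∂μ := by
    intro z hz
    have hfin : ∀ w, ({γ : Γ | dist z (γ • w) ≤ r}).Finite := fun w =>
      (hone z hz w).finite
    calc (∫⁻ w in 𝒟, ENNReal.ofReal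
          ((∑' γ : Γ, K z (γ • w) * χ (dist z (γ • w) / r)) ^ 2) ∂μ)
        ≤ ∫⁻ w in 𝒟, 1 * ∑' γ : Γ, g z (γ • w) ∂μ := by
          refine lintegral_mono fun w => key z w 1 (hfin w) ?_
          have h1 : ({γ : Γ | dist z (γ • w) ≤ r}).encard ≤ 1 :=
            Set.encard_le_one_iff.2 (fun a b ha hb => hone z hz w ha hb)
          rw [(hfin w).encard_eq_coe_toFinset_card] at h1
          have h2 : (hfin w).toFinset.card ≤ 1 := by exact_mod_cast h1
          exact_mod_cast h2
      _ = ∫⁻ w, g z w ∂μ := by simp only [one_mul]; exact unfold z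
      _ ≤ ∫⁻ w, ENNReal.ofReal ((K z w) ^ 2) ∂μ := by
          refine lintegral_mono fun w => ?_
          by_cases h : w ∈ Metric.closedBall z r <;>
            simp [hgdef, Set.indicator_of_mem, Set.indicator_of_notMem, h]
  -- claim on D₂
  have claim2 : ∀ z ∈ D₂,
      (∫⁻ w in 𝒟, ENNReal.ofReal
        ((∑' γ : Γ, K z (γ • w) * χ (dist z (γ • w) / r)) ^ 2) ∂μ)
        ≤ (N : ℝ≥0∞) * (S * V) := by
    intro z hz
    have hz𝒟 : z ∈ 𝒟 := hunion ▸ Set.mem_union_right D₁ hz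
    have hfin : ∀ w, ({γ : Γ | dist z (γ • w) ≤ r}).Finite := by
      intro w
      refine Set.encard_ne_top_iff.1 ?_
      exact ((hN z hz w).trans_lt (WithTop.coe_lt_top N)).ne
    calc (∫⁻ w in 𝒟, ENNReal.ofReal
          ((∑' γ : Γ, K z (γ • w) * χ (dist z (γ • w) / r)) ^ 2) ∂μ)
        ≤ ∫⁻ w in 𝒟, (N : ℝ≥0∞) * ∑' γ : Γ, g z (γ • w) ∂μ := by
          refine lintegral_mono fun w => key z w N (hfin w) ?_
          have h1 := hN z hz w
          rw [(hfin w).encard_eq_coe_toFinset_card] at h1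
          have h2 : (hfin w).toFinset.card ≤ N := by exact_mod_cast h1
          exact_mod_cast h2
      _ = (N : ℝ≥0∞) * ∫⁻ w in 𝒟, ∑' γ : Γ, g z (γ • w) ∂μ :=
          lintegral_const_mul' _ _ (ENNReal.natCast_ne_top N)
      _ = (N : ℝ≥0∞) * ∫⁻ w, g z w ∂μ := by rw [unfold z]
      _ ≤ (N : ℝ≥0∞) * (S * V) := by
          refine mul_le_mul_right ?_ _
          calc ∫⁻ w, g z w ∂μ
              ≤ ∫⁻ w, (Metric.closedBall z r).indicator (fun _ => S) w ∂μ := by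
                refine lintegral_mono fun w => ?_
                by_cases h : w ∈ Metric.closedBall z r
                · simp only [hgdef, Set.indicator_of_mem h, Pi.one_apply, mul_one]
                  exact le_iSup₂_of_le z hz𝒟 (le_iSup (fun w' => ENNReal.ofReal (K z w' ^ 2)) w)
                · simp [hgdef, Set.indicator_of_notMem h]
            _ = S * μ (Metric.closedBall z r) := by
                rw [lintegral_indicator measurableSet_closedBall, setLIntegral_const]
            _ ≤ S * V := mul_le_mul_right (hV z hz) S
  -- assemble
  have hsplit : ∀ f : X → ℝ≥0∞,
      ∫⁻ z in 𝒟, f z ∂μ = ∫⁻ z in D₁, f z ∂μ + ∫⁻ z in D₂, f z ∂μ := by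
    intro f
    rw [← hunion, lintegral_union hD₂ hdisj]
  rw [hsplit (fun z => ∫⁻ w in 𝒟, ENNReal.ofReal
    ((∑' γ : Γ, K z (γ • w) * χ (dist z (γ • w) / r)) ^ 2) ∂μ)]
  refine add_le_add ?_ ?_
  · calc (∫⁻ z in D₁, ∫⁻ w in 𝒟, ENNReal.ofReal
          ((∑' γ : Γ, K z (γ • w) * χ (dist z (γ • w) / r)) ^ 2) ∂μ ∂μ)
        ≤ ∫⁻ z in D₁, ∫⁻ w, ENNReal.ofReal ((K z w) ^ 2) ∂μ ∂μ :=
          lintegral_mono_ae ((ae_restrict_iff' hD₁).2 (Filter.Eventually.of_forall claim1))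
      _ ≤ ∫⁻ z in 𝒟, ∫⁻ w, ENNReal.ofReal ((K z w) ^ 2) ∂μ ∂μ :=
          lintegral_mono_set (hunion ▸ Set.subset_union_left)
  · calc (∫⁻ z in D₂, ∫⁻ w in 𝒟, ENNReal.ofReal
          ((∑' γ : Γ, K z (γ • w) * χ (dist z (γ • w) / r)) ^ 2) ∂μ ∂μ)
        ≤ ∫⁻ _z in D₂, (N : ℝ≥0∞) * (S * V) ∂μ :=
          lintegral_mono_ae ((ae_restrict_iff' hD₂).2 (Filter.Eventually.of_forall claim2))
      _ = (N : ℝ≥0∞) * (S * V) * μ D₂ := setLIntegral_const _ _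
      _ = (N : ℝ≥0∞) * V * μ D₂ * S := by ring
end

section
/- For every compact interval I ⊂ (0,∞) there exists a constant C_I > 0 such that for every r > 1 and every λ ∈ I, the function u ↦ cos(λu)·(cosh r − cosh u)^{−1/2} is integrable on [0,r) and |∫_0^r cos(λu)·(cosh r − cosh u)^{−1/2} du| ≤ C_I · e^{−r/2}. -/
open MeasureTheory
open intervalIntegral

namespace Stmt2Aux

lemma cosh_sub_cosh' (x y : ℝ) :
    Real.cosh x - Real.cosh y = 2 * Real.sinh ((x + y) / 2) * Real.sinh ((x - y) / 2) := by
  have hx : (x + y) / 2 + (x - y) / 2 = x := by ring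
  have hy : (x + y) / 2 - (x - y) / 2 = y := by ring
  calc Real.cosh x - Real.cosh y
      = Real.cosh ((x + y) / 2 + (x - y) / 2) - Real.cosh ((x + y) / 2 - (x - y) / 2) := by
        rw [hx, hy]
    _ = 2 * Real.sinh ((x + y) / 2) * Real.sinh ((x - y) / 2) := by
        rw [Real.cosh_add, Real.cosh_sub]; ring

lemma exp_div_four_le_sinh {x : ℝ} (hx : 1 / 2 ≤ x) : Real.exp x / 4 ≤ Real.sinh x := by
  have h1 : (2 : ℝ) ≤ Real.exp x * Real.exp x := by
    rw [← Real.exp_add]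
    calc (2:ℝ) ≤ Real.exp 1 := by linarith [Real.exp_one_gt_d9]
      _ ≤ Real.exp (x + x) := Real.exp_le_exp.mpr (by linarith)
  have h2 : 0 < Real.exp x := Real.exp_pos x
  have h3 : Real.exp (-x) * Real.exp x = 1 := by rw [← Real.exp_add]; simp
  rw [Real.sinh_eq]
  nlinarith [Real.exp_pos (-x)]

lemma lb1 {r u : ℝ} (hr : 1 < r) (hu0 : 0 ≤ u) (hur : u ≤ r) :
    Real.sinh (r / 2) * (r - u) ≤ Real.cosh r - Real.cosh u := by
  rw [cosh_sub_cosh']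
  have hs : 0 < Real.sinh (r / 2) := Real.sinh_pos_iff.mpr (by linarith)
  have h1 : Real.sinh (r / 2) ≤ Real.sinh ((r + u) / 2) := Real.sinh_le_sinh.mpr (by linarith)
  have h2 : (r - u) / 2 ≤ Real.sinh ((r - u) / 2) := Real.self_le_sinh_iff.mpr (by linarith)
  nlinarith [mul_le_mul h1 h2 (by linarith) (le_of_lt (lt_of_lt_of_le hs h1))]

lemma lb2 {r u : ℝ} (hr : 1 < r) (hu1 : r - 1 ≤ u) (hur : u ≤ r) :
    Real.exp (r - 1/2) / 4 * (r - u) ≤ Real.cosh r - Real.cosh u := by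
  rw [cosh_sub_cosh']
  have h1 : Real.exp (r - 1/2) / 4 ≤ Real.sinh ((r + u) / 2) := by
    calc Real.exp (r - 1/2) / 4 ≤ Real.exp ((r + u) / 2) / 4 := by
          have := Real.exp_le_exp.mpr (show r - 1/2 ≤ (r + u)/2 by linarith); linarith
      _ ≤ Real.sinh ((r + u) / 2) := exp_div_four_le_sinh (by linarith)
  have h2 : (r - u) / 2 ≤ Real.sinh ((r - u) / 2) := Real.self_le_sinh_iff.mpr (by linarith)
  have hp : 0 < Real.exp (r - 1/2) / 4 := by positivity
  nlinarith [mul_le_mul h1 h2 (by linarith) (le_trans hp.le h1)]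

lemma one_div_sqrt_eq (t : ℝ) : 1 / Real.sqrt t = t ^ (-(1/2) : ℝ) := by
  rcases le_or_gt 0 t with ht | ht
  · rw [Real.rpow_neg ht, ← Real.sqrt_eq_rpow, one_div]
  · have h1 : Real.sqrt t = 0 := Real.sqrt_eq_zero'.mpr ht.le
    rw [h1, Real.rpow_def_of_neg ht]
    have h2 : Real.cos (-(1/2) * Real.pi) = 0 := by
      rw [show (-(1/2) : ℝ) * Real.pi = -(Real.pi/2) by ring, Real.cos_neg, Real.cos_pi_div_two]
    rw [h2, mul_zero, div_zero]

lemma one_div_sqrt_exp (y : ℝ) : 1 / Real.sqrt (Real.exp y / 4) = 2 * Real.exp (-(y / 2)) := by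
  have h : Real.exp y / 4 = (Real.exp (y/2) / 2) ^ 2 := by
    rw [div_pow, sq, ← Real.exp_add, show y/2 + y/2 = y by ring]
    norm_num
  rw [h, Real.sqrt_sq (by positivity), Real.exp_neg, one_div_div, div_eq_mul_inv]

lemma integrableOn_one_div_sqrt_sub {r c : ℝ} (hc : c ≤ r) :
    IntegrableOn (fun u : ℝ => 1 / Real.sqrt (r - u)) (Set.Ico c r) volume := by
  rw [← intervalIntegrable_iff_integrableOn_Ico_of_le hc]
  have h0 : IntervalIntegrable (fun x : ℝ => x ^ (-(1/2) : ℝ)) volume (r - r) (r - c) :=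
    intervalIntegral.intervalIntegrable_rpow' (by norm_num)
  have h1 := (h0.comp_sub_left r).symm
  simp only [sub_sub_cancel, sub_self, sub_zero] at h1
  simp only [one_div_sqrt_eq]
  exact h1

lemma tail_integral (r : ℝ) :
    ∫ u in Set.Ico (r - 1) r, 1 / Real.sqrt (r - u) = 2 := by
  have h1 : (∫ u in Set.Ico (r-1) r, 1 / Real.sqrt (r - u))
      = ∫ u in (r-1)..r, 1 / Real.sqrt (r - u) := by
    rw [intervalIntegral.integral_of_le (by linarith), integral_Ioc_eq_integral_Ioo,
      integral_Ico_eq_integral_Ioo]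
  rw [h1]
  simp only [one_div_sqrt_eq]
  have h2 : (∫ u in (r-1)..r, (r - u) ^ (-(1/2) : ℝ))
      = ∫ t in (r - r)..(r - (r-1)), t ^ (-(1/2) : ℝ) :=
    intervalIntegral.integral_comp_sub_left (fun t : ℝ => t ^ (-(1/2) : ℝ)) r
  rw [h2, sub_self, sub_sub_cancel]
  rw [show (∫ t in (0:ℝ)..1, t ^ (-(1/2) : ℝ)) = ((1:ℝ) ^ (-(1/2) + 1 : ℝ) - (0:ℝ) ^ (-(1/2) + 1 : ℝ)) / (-(1/2) + 1) from integral_rpow (Or.inl (by norm_num))]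
  norm_num [Real.one_rpow, Real.zero_rpow]

end Stmt2Aux

open intervalIntegral in
/-- Uniform decay of the oscillatory integral ∫_0^r cos(λu)(cosh r − cosh u)^{−1/2} du. -/
theorem stmt_2 (a b : ℝ) (ha : 0 < a) (hab : a ≤ b) :
    ∃ C > 0, ∀ r : ℝ, 1 < r → ∀ lam ∈ Set.Icc a b,
      IntegrableOn (fun u : ℝ => Real.cos (lam * u) / Real.sqrt (Real.cosh r - Real.cosh u))
        (Set.Ico 0 r) volume ∧
      |∫ u in Set.Ico (0:ℝ) r,
          Real.cos (lam * u) / Real.sqrt (Real.cosh r - Real.cosh u)|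
        ≤ C * Real.exp (-r / 2) := by
  refine ⟨4 * Real.exp (1/4) * (1/a + 1), by positivity, ?_⟩
  intro r hr lam hlam
  obtain ⟨hla, _⟩ := hlam
  have hl0 : 0 < lam := lt_of_lt_of_le ha hla
  have hs0 : (0:ℝ) ≤ r - 1 := by linarith
  have hD : ∀ u : ℝ, 0 ≤ u → u < r → 0 < Real.cosh r - Real.cosh u := by
    intro u h0 h1
    have h2 := Stmt2Aux.lb1 hr h0 h1.le
    have hsp : 0 < Real.sinh (r/2) := Real.sinh_pos_iff.mpr (by linarith)
    nlinarith
  have hb1 : ∀ u ∈ Set.Ico (0:ℝ) r,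
      |Real.cos (lam * u) / Real.sqrt (Real.cosh r - Real.cosh u)|
        ≤ (1 / Real.sqrt (Real.sinh (r/2))) * (1 / Real.sqrt (r - u)) := by
    intro u hu
    obtain ⟨h0, h1⟩ := hu
    have hsp : 0 < Real.sinh (r/2) := Real.sinh_pos_iff.mpr (by linarith)
    have hlb : 0 < Real.sinh (r/2) * (r - u) := mul_pos hsp (by linarith)
    rw [abs_div, abs_of_nonneg (Real.sqrt_nonneg _)]
    calc |Real.cos (lam * u)| / Real.sqrt (Real.cosh r - Real.cosh u)
        ≤ 1 / Real.sqrt (Real.sinh (r/2) * (r - u)) :=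
          div_le_div₀ (by norm_num) (Real.abs_cos_le_one _)
            (Real.sqrt_pos.mpr hlb) (Real.sqrt_le_sqrt (Stmt2Aux.lb1 hr h0 h1.le))
      _ = (1 / Real.sqrt (Real.sinh (r/2))) * (1 / Real.sqrt (r - u)) := by
          rw [Real.sqrt_mul hsp.le, one_div, mul_inv, one_div, one_div]
  have hcont : ContinuousOn
      (fun u : ℝ => Real.cos (lam * u) / Real.sqrt (Real.cosh r - Real.cosh u))
      (Set.Ico 0 r) := by
    apply ContinuousOn.div
    · exact (Real.continuous_cos.comp (continuous_const.mul continuous_id)).continuousOn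
    · exact (Real.continuous_sqrt.comp (continuous_const.sub Real.continuous_cosh)).continuousOn
    · intro u hu
      exact (Real.sqrt_pos.mpr (hD u hu.1 hu.2)).ne'
  have hint : IntegrableOn
      (fun u : ℝ => Real.cos (lam * u) / Real.sqrt (Real.cosh r - Real.cosh u))
      (Set.Ico 0 r) volume := by
    have hint0 : IntegrableOn
        (fun u : ℝ => (1 / Real.sqrt (Real.sinh (r/2))) * (1 / Real.sqrt (r - u)))
        (Set.Ico 0 r) volume :=
      (Stmt2Aux.integrableOn_one_div_sqrt_sub (by linarith : (0:ℝ) ≤ r)).const_mul _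
    apply Integrable.mono' hint0 (hcont.aestronglyMeasurable measurableSet_Ico)
    rw [ae_restrict_iff' measurableSet_Ico]
    exact ae_of_all _ fun u hu => by rw [Real.norm_eq_abs]; exact hb1 u hu
  refine ⟨hint, ?_⟩
  -- split the integral at r - 1
  have hint1 : IntegrableOn
      (fun u : ℝ => Real.cos (lam * u) / Real.sqrt (Real.cosh r - Real.cosh u))
      (Set.Ico 0 (r-1)) volume := hint.mono_set (Set.Ico_subset_Ico_right (by linarith))
  have hint2 : IntegrableOn
      (fun u : ℝ => Real.cos (lam * u) / Real.sqrt (Real.cosh r - Real.cosh u))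
      (Set.Ico (r-1) r) volume := hint.mono_set (Set.Ico_subset_Ico_left (by linarith))
  have hsplit : (∫ u in Set.Ico (0:ℝ) r,
        Real.cos (lam * u) / Real.sqrt (Real.cosh r - Real.cosh u))
      = (∫ u in Set.Ico (0:ℝ) (r-1),
          Real.cos (lam * u) / Real.sqrt (Real.cosh r - Real.cosh u))
        + ∫ u in Set.Ico (r-1) r,
            Real.cos (lam * u) / Real.sqrt (Real.cosh r - Real.cosh u) := by
    rw [← setIntegral_union (Set.Ico_disjoint_Ico_same) measurableSet_Ico hint1 hint2,
      Set.Ico_union_Ico_eq_Ico hs0 (by linarith)]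
  -- tail bound
  have hb2 : ∀ u ∈ Set.Ico (r-1) r,
      |Real.cos (lam * u) / Real.sqrt (Real.cosh r - Real.cosh u)|
        ≤ 2 * Real.exp (1/4) * Real.exp (-r/2) * (1 / Real.sqrt (r - u)) := by
    intro u hu
    obtain ⟨h0, h1⟩ := hu
    have hlb : 0 < Real.exp (r - 1/2) / 4 * (r - u) :=
      mul_pos (by positivity) (by linarith)
    rw [abs_div, abs_of_nonneg (Real.sqrt_nonneg _)]
    have step1 : |Real.cos (lam * u)| / Real.sqrt (Real.cosh r - Real.cosh u)
        ≤ 1 / Real.sqrt (Real.exp (r - 1/2)/4 * (r - u)) :=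
      div_le_div₀ (by norm_num) (Real.abs_cos_le_one _) (Real.sqrt_pos.mpr hlb)
        (Real.sqrt_le_sqrt (Stmt2Aux.lb2 hr h0 h1.le))
    have step2 : 1 / Real.sqrt (Real.exp (r - 1/2)/4 * (r - u))
        = 2 * Real.exp (1/4) * Real.exp (-r/2) * (1 / Real.sqrt (r - u)) := by
      rw [Real.sqrt_mul (by positivity) (r - u), one_div, mul_inv, ← one_div, ← one_div,
        Stmt2Aux.one_div_sqrt_exp, show -((r - 1/2)/2) = 1/4 + -r/2 by ring, Real.exp_add]
      ring
    rw [step2] at step1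
    exact step1
  have htail : |∫ u in Set.Ico (r-1) r,
        Real.cos (lam * u) / Real.sqrt (Real.cosh r - Real.cosh u)|
      ≤ 4 * Real.exp (1/4) * Real.exp (-r/2) := by
    have h1 := norm_integral_le_integral_norm (μ := volume.restrict (Set.Ico (r-1) r))
      (fun u : ℝ => Real.cos (lam * u) / Real.sqrt (Real.cosh r - Real.cosh u))
    simp only [Real.norm_eq_abs] at h1
    have h2 : (∫ u in Set.Ico (r-1) r,
          |Real.cos (lam * u) / Real.sqrt (Real.cosh r - Real.cosh u)|)
        ≤ ∫ u in Set.Ico (r-1) r,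
            2 * Real.exp (1/4) * Real.exp (-r/2) * (1 / Real.sqrt (r - u)) :=
      setIntegral_mono_on hint2.abs
        (((Stmt2Aux.integrableOn_one_div_sqrt_sub (by linarith)).const_mul _))
        measurableSet_Ico (fun u hu => hb2 u hu)
    have h3 : (∫ u in Set.Ico (r-1) r,
          2 * Real.exp (1/4) * Real.exp (-r/2) * (1 / Real.sqrt (r - u)))
        = 2 * Real.exp (1/4) * Real.exp (-r/2) * 2 := by
      rw [MeasureTheory.integral_const_mul, Stmt2Aux.tail_integral r]
    rw [h3] at h2
    calc |∫ u in Set.Ico (r-1) r,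
          Real.cos (lam * u) / Real.sqrt (Real.cosh r - Real.cosh u)|
        ≤ ∫ u in Set.Ico (r-1) r,
            |Real.cos (lam * u) / Real.sqrt (Real.cosh r - Real.cosh u)| := h1
      _ ≤ 2 * Real.exp (1/4) * Real.exp (-r/2) * 2 := h2
      _ = 4 * Real.exp (1/4) * Real.exp (-r/2) := by ring
  -- integration by parts on [0, r-1]
  set g : ℝ → ℝ := fun u => (Real.sqrt (Real.cosh r - Real.cosh u))⁻¹ with hg
  set g' : ℝ → ℝ := fun u => Real.sinh u /
    (2 * (Real.cosh r - Real.cosh u) * Real.sqrt (Real.cosh r - Real.cosh u)) with hg'def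
  have hgnn : ∀ u, 0 ≤ g u := fun u => by simp only [hg]; positivity
  have key : ∀ x : ℝ, 0 ≤ x → x ≤ r - 1 → HasDerivAt g (g' x) x := by
    intro x hx0 hxs
    have hDx : 0 < Real.cosh r - Real.cosh x := hD x hx0 (by linarith)
    have h1 : HasDerivAt (fun u : ℝ => Real.cosh r - Real.cosh u) (-Real.sinh x) x :=
      (Real.hasDerivAt_cosh x).const_sub _
    have h2 : HasDerivAt (fun u : ℝ => Real.sqrt (Real.cosh r - Real.cosh u))
        (1 / (2 * Real.sqrt (Real.cosh r - Real.cosh x)) * -Real.sinh x) x :=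
      (Real.hasDerivAt_sqrt hDx.ne').comp x h1
    have h3 : HasDerivAt g _ x := h2.inv (Real.sqrt_pos.mpr hDx).ne'
    convert h3 using 1
    have hsq : Real.sqrt (Real.cosh r - Real.cosh x) ≠ 0 := (Real.sqrt_pos.mpr hDx).ne'
    show Real.sinh x / (2 * (Real.cosh r - Real.cosh x) * Real.sqrt (Real.cosh r - Real.cosh x)) = _
    rw [Real.sq_sqrt hDx.le]
    rw [show -(1 / (2 * Real.sqrt (Real.cosh r - Real.cosh x)) * -Real.sinh x)
        = Real.sinh x / (2 * Real.sqrt (Real.cosh r - Real.cosh x)) by ring, div_div]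
    ring_nf
  have hg'cont : ContinuousOn g' (Set.Icc 0 (r-1)) := by
    apply ContinuousOn.div Real.continuous_sinh.continuousOn
    · exact ((continuous_const.mul (continuous_const.sub Real.continuous_cosh)).mul
        (Real.continuous_sqrt.comp (continuous_const.sub Real.continuous_cosh))).continuousOn
    · intro x hx
      have hDx : 0 < Real.cosh r - Real.cosh x := hD x hx.1 (by linarith [hx.2])
      exact (mul_pos (mul_pos two_pos hDx) (Real.sqrt_pos.mpr hDx)).ne'
  have hg'int : IntervalIntegrable g' volume 0 (r-1) := by
    apply ContinuousOn.intervalIntegrable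
    rwa [Set.uIcc_of_le hs0]
  have hg'nn : ∀ x ∈ Set.Icc (0:ℝ) (r-1), 0 ≤ g' x := by
    intro x hx
    have hDx : 0 < Real.cosh r - Real.cosh x := hD x hx.1 (by linarith [hx.2])
    simp only [hg'def]
    exact div_nonneg (Real.sinh_nonneg_iff.mpr hx.1)
      (mul_pos (mul_pos two_pos hDx) (Real.sqrt_pos.mpr hDx)).le
  have hderivs : ∀ x ∈ Set.uIcc (0:ℝ) (r-1), HasDerivAt g (g' x) x := by
    intro x hx
    rw [Set.uIcc_of_le hs0] at hx
    exact key x hx.1 hx.2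
  have hftc : (∫ x in (0:ℝ)..(r-1), g' x) = g (r-1) - g 0 :=
    intervalIntegral.integral_eq_sub_of_hasDerivAt hderivs hg'int
  have hv : ∀ x : ℝ, HasDerivAt (fun y : ℝ => Real.sin (lam * y) / lam)
      (Real.cos (lam * x)) x := by
    intro x
    have h1 : HasDerivAt (fun y : ℝ => lam * y) lam x := by
      simpa using (hasDerivAt_id x).const_mul lam
    have h2 : HasDerivAt (fun y : ℝ => Real.sin (lam * y)) (Real.cos (lam * x) * lam) x :=
      (Real.hasDerivAt_sin (lam * x)).comp x h1
    have h3 := h2.div_const lam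
    simpa [mul_div_cancel_right₀ _ hl0.ne'] using h3
  have hcos_int : IntervalIntegrable (fun x : ℝ => Real.cos (lam * x)) volume 0 (r-1) :=
    (Real.continuous_cos.comp (continuous_const.mul continuous_id)).intervalIntegrable _ _
  have hibp : (∫ x in (0:ℝ)..(r-1), g x * Real.cos (lam * x))
      = g (r-1) * (Real.sin (lam * (r-1)) / lam) - g 0 * (Real.sin (lam * 0) / lam)
        - ∫ x in (0:ℝ)..(r-1), g' x * (Real.sin (lam * x) / lam) :=
    intervalIntegral.integral_mul_deriv_eq_deriv_mul hderivs (fun x _ => hv x) hg'int hcos_int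
  have hprodint : IntervalIntegrable (fun x => g' x * (Real.sin (lam * x) / lam)) volume 0 (r-1) := by
    apply ContinuousOn.intervalIntegrable
    rw [Set.uIcc_of_le hs0]
    exact hg'cont.mul (((Real.continuous_sin.comp
      (continuous_const.mul continuous_id)).div_const lam).continuousOn)
  have hIg' : |∫ x in (0:ℝ)..(r-1), g' x * (Real.sin (lam * x) / lam)|
      ≤ (g (r-1) - g 0) / lam := by
    have h1 := intervalIntegral.norm_integral_le_integral_norm
      (f := fun x => g' x * (Real.sin (lam * x) / lam)) (μ := volume) hs0
    simp only [Real.norm_eq_abs] at h1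
    have h2 : (∫ x in (0:ℝ)..(r-1), |g' x * (Real.sin (lam * x) / lam)|)
        ≤ ∫ x in (0:ℝ)..(r-1), g' x * (1/lam) := by
      apply intervalIntegral.integral_mono_on hs0 hprodint.abs (hg'int.mul_const _)
      intro x hx
      rw [abs_mul, abs_of_nonneg (hg'nn x hx), abs_div, abs_of_pos hl0]
      exact mul_le_mul_of_nonneg_left
        ((div_le_div_iff_of_pos_right hl0).mpr (Real.abs_sin_le_one _)) (hg'nn x hx)
    have h3 : (∫ x in (0:ℝ)..(r-1), g' x * (1/lam)) = (g (r-1) - g 0) * (1/lam) := by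
      rw [intervalIntegral.integral_mul_const, hftc]
    calc |∫ x in (0:ℝ)..(r-1), g' x * (Real.sin (lam * x) / lam)|
        ≤ ∫ x in (0:ℝ)..(r-1), |g' x * (Real.sin (lam * x) / lam)| := h1
      _ ≤ ∫ x in (0:ℝ)..(r-1), g' x * (1/lam) := h2
      _ = (g (r-1) - g 0) / lam := by rw [h3, mul_one_div]
  have hI1 : |∫ x in (0:ℝ)..(r-1), g x * Real.cos (lam * x)| ≤ 2 / lam * g (r-1) := by
    rw [hibp]
    have hb0 : |g (r-1) * (Real.sin (lam * (r-1)) / lam)| ≤ g (r-1) / lam := by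
      rw [abs_mul, abs_of_nonneg (hgnn _), abs_div, abs_of_pos hl0]
      calc g (r-1) * (|Real.sin (lam * (r-1))| / lam) ≤ g (r-1) * (1 / lam) :=
            mul_le_mul_of_nonneg_left
              ((div_le_div_iff_of_pos_right hl0).mpr (Real.abs_sin_le_one _)) (hgnn _)
        _ = g (r-1) / lam := by rw [mul_one_div]
    have hz : Real.sin (lam * 0) = 0 := by simp
    rw [hz]
    simp only [zero_div, mul_zero, sub_zero]
    calc |g (r-1) * (Real.sin (lam * (r-1)) / lam)
          - ∫ x in (0:ℝ)..(r-1), g' x * (Real.sin (lam * x) / lam)|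
        ≤ |g (r-1) * (Real.sin (lam * (r-1)) / lam)|
          + |∫ x in (0:ℝ)..(r-1), g' x * (Real.sin (lam * x) / lam)| := abs_sub _ _
      _ ≤ g (r-1) / lam + (g (r-1) - g 0) / lam := add_le_add hb0 hIg'
      _ = (g (r-1) + (g (r-1) - g 0)) / lam := by ring
      _ ≤ (2 * g (r-1)) / lam := (div_le_div_iff_of_pos_right hl0).mpr (by linarith [hgnn 0])
      _ = 2 / lam * g (r-1) := by ring
  have hI1eq : (∫ u in Set.Ico (0:ℝ) (r-1),
        Real.cos (lam * u) / Real.sqrt (Real.cosh r - Real.cosh u))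
      = ∫ x in (0:ℝ)..(r-1), g x * Real.cos (lam * x) := by
    have hfe : (fun u : ℝ => Real.cos (lam * u) / Real.sqrt (Real.cosh r - Real.cosh u))
        = fun x => g x * Real.cos (lam * x) := by
      funext u
      simp only [hg]
      ring
    rw [hfe, intervalIntegral.integral_of_le hs0, integral_Ioc_eq_integral_Ioo,
      integral_Ico_eq_integral_Ioo]
  have hggs : g (r-1) ≤ 2 * Real.exp (1/4) * Real.exp (-r/2) := by
    have h1 : Real.exp (r - 1/2)/4 ≤ Real.cosh r - Real.cosh (r-1) := by
      have h := Stmt2Aux.lb2 hr (le_refl (r-1)) (by linarith)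
      rw [show r - (r-1) = 1 by ring, mul_one] at h
      exact h
    have h2 : g (r-1) ≤ 1 / Real.sqrt (Real.exp (r - 1/2)/4) := by
      simp only [hg]
      rw [← one_div]
      exact div_le_div₀ (by norm_num) le_rfl (Real.sqrt_pos.mpr (by positivity))
        (Real.sqrt_le_sqrt h1)
    rw [Stmt2Aux.one_div_sqrt_exp, show -((r - 1/2)/2) = 1/4 + -r/2 by ring,
      Real.exp_add] at h2
    linarith
  -- put everything together
  rw [hsplit]
  calc |(∫ u in Set.Ico (0:ℝ) (r-1),
          Real.cos (lam * u) / Real.sqrt (Real.cosh r - Real.cosh u))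
        + ∫ u in Set.Ico (r-1) r,
            Real.cos (lam * u) / Real.sqrt (Real.cosh r - Real.cosh u)|
      ≤ |∫ u in Set.Ico (0:ℝ) (r-1),
          Real.cos (lam * u) / Real.sqrt (Real.cosh r - Real.cosh u)|
        + |∫ u in Set.Ico (r-1) r,
            Real.cos (lam * u) / Real.sqrt (Real.cosh r - Real.cosh u)| := abs_add_le _ _
    _ ≤ 2 / lam * g (r-1) + 4 * Real.exp (1/4) * Real.exp (-r/2) := by
        rw [hI1eq]
        exact add_le_add hI1 htail
    _ ≤ 2 / a * (2 * Real.exp (1/4) * Real.exp (-r/2))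
        + 4 * Real.exp (1/4) * Real.exp (-r/2) := by
        apply add_le_add_left
        apply mul_le_mul _ hggs (hgnn _) (by positivity)
        gcongr
    _ = 4 * Real.exp (1/4) * (1/a + 1) * Real.exp (-r / 2) := by ring
end

section
/- For every λ₀ > 0 there exists a constant C > 0 such that for all r > 1 and all λ ≥ λ₀, |∫_0^{r−1} cos(λu) · ρ_r(u) du| ≤ C, where ρ_r(u) = (1 − e^{−(r+u)})^{−1/2} · (1 − e^{−(r−u)})^{−1/2}. In fact one may take C = (1/λ₀)·((1/2)·e^{−1}·(1−e^{−1})^{−2} + (1−e^{−1})^{−1}). -/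
open Real intervalIntegral MeasureTheory Set

set_option maxHeartbeats 1000000 in
private lemma key_bound (r lam : ℝ) (hr : 1 < r) (hlam : 0 < lam) :
    |∫ u in (0:ℝ)..(r - 1), Real.cos (lam * u) *
        ((Real.sqrt (1 - Real.exp (-(r + u))))⁻¹ *
          (Real.sqrt (1 - Real.exp (-(r - u))))⁻¹)| ≤
      (1 / lam) * ((1 / 2) * Real.exp (-1) * ((1 - Real.exp (-1)) ^ 2)⁻¹
            + (1 - Real.exp (-1))⁻¹) := by
  set K : ℝ := 1 - Real.exp (-1) with hKdef
  have hK0 : 0 < K := by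
    have : Real.exp (-1) < 1 := Real.exp_lt_one_iff.mpr (by norm_num)
    linarith
  have hab : (0:ℝ) ≤ r - 1 := by linarith
  set A : ℝ → ℝ := fun u => 1 - Real.exp (-(r + u)) with hAdef
  set B : ℝ → ℝ := fun u => 1 - Real.exp (-(r - u)) with hBdef
  have hA : ∀ u ∈ Icc (0:ℝ) (r - 1), K ≤ A u := by
    intro u hu
    have : Real.exp (-(r + u)) ≤ Real.exp (-1) := by
      apply Real.exp_le_exp.mpr; have := hu.1; linarith
    simp only [hAdef]; linarith
  have hB : ∀ u ∈ Icc (0:ℝ) (r - 1), K ≤ B u := by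
    intro u hu
    have : Real.exp (-(r - u)) ≤ Real.exp (-1) := by
      apply Real.exp_le_exp.mpr; have := hu.2; linarith
    simp only [hBdef]; linarith
  have hApos : ∀ u ∈ Icc (0:ℝ) (r - 1), 0 < A u := fun u hu => lt_of_lt_of_le hK0 (hA u hu)
  have hBpos : ∀ u ∈ Icc (0:ℝ) (r - 1), 0 < B u := fun u hu => lt_of_lt_of_le hK0 (hB u hu)
  have hsA : ∀ u ∈ Icc (0:ℝ) (r - 1), Real.sqrt K ≤ Real.sqrt (A u) :=
    fun u hu => Real.sqrt_le_sqrt (hA u hu)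
  have hsB : ∀ u ∈ Icc (0:ℝ) (r - 1), Real.sqrt K ≤ Real.sqrt (B u) :=
    fun u hu => Real.sqrt_le_sqrt (hB u hu)
  have hsK : 0 < Real.sqrt K := Real.sqrt_pos.mpr hK0
  -- the density ρ and its derivative
  set ρ : ℝ → ℝ := fun u => (Real.sqrt (A u))⁻¹ * (Real.sqrt (B u))⁻¹ with hρdef
  set ρ' : ℝ → ℝ := fun u =>
      (-(Real.exp (-(r + u)) / (2 * Real.sqrt (A u))) / Real.sqrt (A u) ^ 2)
        * (Real.sqrt (B u))⁻¹
      + (Real.sqrt (A u))⁻¹ *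
        (-(-Real.exp (-(r - u)) / (2 * Real.sqrt (B u))) / Real.sqrt (B u) ^ 2) with hρ'def
  have huIcc : uIcc (0:ℝ) (r - 1) = Icc (0:ℝ) (r - 1) := uIcc_of_le hab
  have hderiv : ∀ u ∈ uIcc (0:ℝ) (r - 1), HasDerivAt ρ (ρ' u) u := by
    intro u hu
    rw [huIcc] at hu
    have hA1 : HasDerivAt (fun u : ℝ => -(r + u)) (-1) u := by
      exact ((hasDerivAt_id' u).const_add r).neg
    have hA2 : HasDerivAt (fun u : ℝ => Real.exp (-(r + u)))
        (Real.exp (-(r + u)) * (-1)) u := (Real.hasDerivAt_exp _).comp u hA1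
    have hA3 : HasDerivAt A (Real.exp (-(r + u))) u := by
      have := hA2.const_sub 1
      rw [show Real.exp (-(r + u)) = -(Real.exp (-(r + u)) * (-1)) by ring]; exact this
    have hB1 : HasDerivAt (fun u : ℝ => -(r - u)) 1 u := by
      have := ((hasDerivAt_id' u).const_sub r).neg; rw [neg_neg] at this; exact this
    have hB2 : HasDerivAt (fun u : ℝ => Real.exp (-(r - u)))
        (Real.exp (-(r - u)) * 1) u := (Real.hasDerivAt_exp _).comp u hB1
    have hB3 : HasDerivAt B (-Real.exp (-(r - u))) u := by
      have := hB2.const_sub 1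
      rw [show -Real.exp (-(r - u)) = -(Real.exp (-(r - u)) * 1) by ring]; exact this
    have hAne : A u ≠ 0 := ne_of_gt (hApos u hu)
    have hBne : B u ≠ 0 := ne_of_gt (hBpos u hu)
    have hsAne : Real.sqrt (A u) ≠ 0 := ne_of_gt (Real.sqrt_pos.mpr (hApos u hu))
    have hsBne : Real.sqrt (B u) ≠ 0 := ne_of_gt (Real.sqrt_pos.mpr (hBpos u hu))
    have h1 : HasDerivAt (fun u => (Real.sqrt (A u))⁻¹)
        (-(Real.exp (-(r + u)) / (2 * Real.sqrt (A u))) / Real.sqrt (A u) ^ 2) u :=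
      (hA3.sqrt hAne).inv hsAne
    have h2 : HasDerivAt (fun u => (Real.sqrt (B u))⁻¹)
        (-(-Real.exp (-(r - u)) / (2 * Real.sqrt (B u))) / Real.sqrt (B u) ^ 2) u :=
      (hB3.sqrt hBne).inv hsBne
    exact h1.mul h2
  -- the antiderivative of cos
  set v : ℝ → ℝ := fun u => Real.sin (lam * u) / lam with hvdef
  have hlamne : lam ≠ 0 := ne_of_gt hlam
  have hvderiv : ∀ u ∈ uIcc (0:ℝ) (r - 1), HasDerivAt v (Real.cos (lam * u)) u := by
    intro u _
    have h1 : HasDerivAt (fun u : ℝ => lam * u) lam u := by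
      simpa using (hasDerivAt_id u).const_mul lam
    have h2 : HasDerivAt (fun u : ℝ => Real.sin (lam * u))
        (Real.cos (lam * u) * lam) u := (Real.hasDerivAt_sin _).comp u h1
    have := h2.div_const lam
    simpa [mul_div_assoc, mul_div_cancel_right₀ _ hlamne] using this
  -- continuity of ρ'
  have hcontA : Continuous A := by fun_prop
  have hcontB : Continuous B := by fun_prop
  have hcsA : Continuous fun u => Real.sqrt (A u) := hcontA.sqrt
  have hcsB : Continuous fun u => Real.sqrt (B u) := hcontB.sqrt
  have hsAne' : ∀ u ∈ uIcc (0:ℝ) (r - 1), Real.sqrt (A u) ≠ 0 := by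
    intro u hu; rw [huIcc] at hu; exact ne_of_gt (Real.sqrt_pos.mpr (hApos u hu))
  have hsBne' : ∀ u ∈ uIcc (0:ℝ) (r - 1), Real.sqrt (B u) ≠ 0 := by
    intro u hu; rw [huIcc] at hu; exact ne_of_gt (Real.sqrt_pos.mpr (hBpos u hu))
  have hcontInvA : ContinuousOn (fun u => (Real.sqrt (A u))⁻¹) (uIcc (0:ℝ) (r - 1)) :=
    hcsA.continuousOn.inv₀ hsAne'
  have hcontInvB : ContinuousOn (fun u => (Real.sqrt (B u))⁻¹) (uIcc (0:ℝ) (r - 1)) :=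
    hcsB.continuousOn.inv₀ hsBne'
  have hcontρ' : ContinuousOn ρ' (uIcc (0:ℝ) (r - 1)) := by
    apply ContinuousOn.add
    · apply ContinuousOn.mul _ hcontInvB
      apply ContinuousOn.div
      · apply ContinuousOn.neg
        apply ContinuousOn.div (by fun_prop) (by fun_prop)
        intro u hu
        have := hsAne' u hu
        positivity
      · fun_prop
      · intro u hu; exact pow_ne_zero _ (hsAne' u hu)
    · apply ContinuousOn.mul hcontInvA
      apply ContinuousOn.div
      · apply ContinuousOn.neg
        apply ContinuousOn.div (by fun_prop) (by fun_prop)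
        intro u hu
        have := hsBne' u hu
        positivity
      · fun_prop
      · intro u hu; exact pow_ne_zero _ (hsBne' u hu)
  have hintρ' : IntervalIntegrable ρ' volume 0 (r - 1) := hcontρ'.intervalIntegrable
  have hintcos : IntervalIntegrable (fun u => Real.cos (lam * u)) volume 0 (r - 1) := by
    apply Continuous.intervalIntegrable; fun_prop
  -- integration by parts
  have hIBP : (∫ u in (0:ℝ)..(r - 1), ρ u * Real.cos (lam * u))
      = ρ (r - 1) * v (r - 1) - ρ 0 * v 0 - ∫ u in (0:ℝ)..(r - 1), ρ' u * v u :=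
    intervalIntegral.integral_mul_deriv_eq_deriv_mul hderiv hvderiv hintρ' hintcos
  have hswap : (∫ u in (0:ℝ)..(r - 1), Real.cos (lam * u) *
        ((Real.sqrt (1 - Real.exp (-(r + u))))⁻¹ *
          (Real.sqrt (1 - Real.exp (-(r - u))))⁻¹))
      = ∫ u in (0:ℝ)..(r - 1), ρ u * Real.cos (lam * u) := by
    apply intervalIntegral.integral_congr
    intro u _
    simp [hρdef, hAdef, hBdef, mul_comm]
  -- bound the boundary term
  have hv0 : v 0 = 0 := by simp [hvdef]
  have hbnd : |ρ (r - 1) * v (r - 1)| ≤ K⁻¹ * (1 / lam) := by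
    rw [abs_mul]
    apply mul_le_mul
    · have h1 : (0:ℝ) ≤ r - 1 := hab
      have hmem : r - 1 ∈ Icc (0:ℝ) (r - 1) := by constructor <;> linarith
      have hρpos : 0 ≤ ρ (r - 1) := by
        apply mul_nonneg <;> positivity
      rw [abs_of_nonneg hρpos]
      have h2 : (Real.sqrt (A (r-1)))⁻¹ ≤ (Real.sqrt K)⁻¹ :=
        inv_anti₀ hsK (hsA _ hmem)
      have h3 : (Real.sqrt (B (r-1)))⁻¹ ≤ (Real.sqrt K)⁻¹ :=
        inv_anti₀ hsK (hsB _ hmem)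
      calc ρ (r-1) ≤ (Real.sqrt K)⁻¹ * (Real.sqrt K)⁻¹ := by
            apply mul_le_mul h2 h3 (by positivity) (by positivity)
        _ = K⁻¹ := by
            rw [← mul_inv, Real.mul_self_sqrt hK0.le]
    · rw [hvdef, abs_div, abs_of_pos hlam]
      gcongr
      exact Real.abs_sin_le_one _
    · positivity
    · positivity
  -- bound the remainder integral
  set M : ℝ := (1 / 2) * (K ^ 2)⁻¹ * (1 / lam) with hMdef
  have hMpos : 0 < M := by positivity
  set φ : ℝ → ℝ := fun u => M * (Real.exp (-(r - u)) + Real.exp (-(r + u))) with hφdef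
  have hptwise : ∀ u ∈ Icc (0:ℝ) (r - 1), |ρ' u * v u| ≤ φ u := by
    intro u hu
    have hsApos : 0 < Real.sqrt (A u) := Real.sqrt_pos.mpr (hApos u hu)
    have hsBpos : 0 < Real.sqrt (B u) := Real.sqrt_pos.mpr (hBpos u hu)
    have hvb : |v u| ≤ 1 / lam := by
      rw [hvdef, abs_div, abs_of_pos hlam]
      gcongr
      exact Real.abs_sin_le_one _
    have hE1 : (0:ℝ) < Real.exp (-(r + u)) := Real.exp_pos _
    have hE2 : (0:ℝ) < Real.exp (-(r - u)) := Real.exp_pos _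
    have hterm1 : |(-(Real.exp (-(r + u)) / (2 * Real.sqrt (A u))) / Real.sqrt (A u) ^ 2)
        * (Real.sqrt (B u))⁻¹| ≤ (1/2) * (K ^ 2)⁻¹ * Real.exp (-(r + u)) := by
      have habs : (-(Real.exp (-(r + u)) / (2 * Real.sqrt (A u))) / Real.sqrt (A u) ^ 2)
          * (Real.sqrt (B u))⁻¹
          = -(Real.exp (-(r + u)) / (2 * Real.sqrt (A u)) / Real.sqrt (A u) ^ 2
            * (Real.sqrt (B u))⁻¹) := by ring
      rw [habs, abs_neg, abs_of_nonneg (by positivity)]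
      have step : Real.exp (-(r + u)) / (2 * Real.sqrt (A u)) / Real.sqrt (A u) ^ 2
          * (Real.sqrt (B u))⁻¹
          ≤ Real.exp (-(r + u)) / (2 * Real.sqrt K) / Real.sqrt K ^ 2
          * (Real.sqrt K)⁻¹ := by
        gcongr <;> first
          | exact hsA u hu | exact hsB u hu | exact hA u hu | exact hB u hu
      refine step.trans (le_of_eq ?_)
      rw [Real.sq_sqrt hK0.le]
      field_simp
      ring_nf
      rw [Real.sq_sqrt hK0.le]
    have hterm2 : |(Real.sqrt (A u))⁻¹ *
        (-(-Real.exp (-(r - u)) / (2 * Real.sqrt (B u))) / Real.sqrt (B u) ^ 2)|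
        ≤ (1/2) * (K ^ 2)⁻¹ * Real.exp (-(r - u)) := by
      have habs : (Real.sqrt (A u))⁻¹ *
          (-(-Real.exp (-(r - u)) / (2 * Real.sqrt (B u))) / Real.sqrt (B u) ^ 2)
          = (Real.sqrt (A u))⁻¹ *
            (Real.exp (-(r - u)) / (2 * Real.sqrt (B u)) / Real.sqrt (B u) ^ 2) := by ring
      rw [habs, abs_of_nonneg (by positivity)]
      have step : (Real.sqrt (A u))⁻¹ *
          (Real.exp (-(r - u)) / (2 * Real.sqrt (B u)) / Real.sqrt (B u) ^ 2)
          ≤ (Real.sqrt K)⁻¹ *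
          (Real.exp (-(r - u)) / (2 * Real.sqrt K) / Real.sqrt K ^ 2) := by
        gcongr <;> first
          | exact hsA u hu | exact hsB u hu | exact hA u hu | exact hB u hu
      refine step.trans (le_of_eq ?_)
      rw [Real.sq_sqrt hK0.le]
      field_simp
      ring_nf
      rw [Real.sq_sqrt hK0.le]
    have hρ'b : |ρ' u| ≤ (1/2) * (K ^ 2)⁻¹ *
        (Real.exp (-(r + u)) + Real.exp (-(r - u))) := by
      calc |ρ' u| ≤ _ + _ := abs_add_le _ _
        _ ≤ (1/2) * (K ^ 2)⁻¹ * Real.exp (-(r + u))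
            + (1/2) * (K ^ 2)⁻¹ * Real.exp (-(r - u)) := add_le_add hterm1 hterm2
        _ = _ := by ring
    calc |ρ' u * v u| = |ρ' u| * |v u| := abs_mul _ _
      _ ≤ ((1/2) * (K ^ 2)⁻¹ * (Real.exp (-(r + u)) + Real.exp (-(r - u)))) * (1 / lam) := by
          apply mul_le_mul hρ'b hvb (abs_nonneg _) (by positivity)
      _ = φ u := by rw [hφdef, hMdef]; ring
  have hcontρ'v : ContinuousOn (fun u => |ρ' u * v u|) (uIcc (0:ℝ) (r - 1)) := by
    apply ContinuousOn.abs
    apply hcontρ'.mul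
    fun_prop
  have hintabs : IntervalIntegrable (fun u => |ρ' u * v u|) volume 0 (r - 1) :=
    hcontρ'v.intervalIntegrable
  have hintφ : IntervalIntegrable φ volume 0 (r - 1) := by
    apply Continuous.intervalIntegrable; fun_prop
  -- compute ∫ φ
  have hFTC : (∫ u in (0:ℝ)..(r - 1), (Real.exp (-(r - u)) + Real.exp (-(r + u))))
      = Real.exp (-1) - Real.exp (-(2*r - 1)) := by
    have hd : ∀ u ∈ uIcc (0:ℝ) (r - 1),
        HasDerivAt (fun u => Real.exp (-(r - u)) - Real.exp (-(r + u)))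
          (Real.exp (-(r - u)) + Real.exp (-(r + u))) u := by
      intro u _
      have h1 : HasDerivAt (fun u : ℝ => -(r - u)) 1 u := by
        have := ((hasDerivAt_id' u).const_sub r).neg; rw [neg_neg] at this; exact this
      have h2 : HasDerivAt (fun u : ℝ => Real.exp (-(r - u)))
          (Real.exp (-(r - u)) * 1) u := (Real.hasDerivAt_exp _).comp u h1
      have h3 : HasDerivAt (fun u : ℝ => -(r + u)) (-1) u := by
        exact ((hasDerivAt_id' u).const_add r).neg
      have h4 : HasDerivAt (fun u : ℝ => Real.exp (-(r + u)))
          (Real.exp (-(r + u)) * (-1)) u := (Real.hasDerivAt_exp _).comp u h3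
      have := h2.sub h4
      rw [show Real.exp (-(r - u)) + Real.exp (-(r + u))
        = Real.exp (-(r - u)) * 1 - Real.exp (-(r + u)) * (-1) by ring]
      exact this
    have hint : IntervalIntegrable
        (fun u => Real.exp (-(r - u)) + Real.exp (-(r + u))) volume 0 (r - 1) := by
      apply Continuous.intervalIntegrable; fun_prop
    rw [intervalIntegral.integral_eq_sub_of_hasDerivAt hd hint]
    have e1 : -(r - (r - 1)) = (-1 : ℝ) := by ring
    have e2 : -(r + (r - 1)) = -(2*r - 1) := by ring
    have e3 : -(r - 0) = -r := by ring
    have e4 : -(r + 0) = -r := by ring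
    rw [e1, e2, e3, e4]
    ring
  have hφint : (∫ u in (0:ℝ)..(r - 1), φ u) ≤ M * Real.exp (-1) := by
    rw [hφdef]
    rw [intervalIntegral.integral_const_mul, hFTC]
    have : Real.exp (-(2*r - 1)) > 0 := Real.exp_pos _
    nlinarith [hMpos]
  have hJ : |∫ u in (0:ℝ)..(r - 1), ρ' u * v u| ≤ M * Real.exp (-1) := by
    calc |∫ u in (0:ℝ)..(r - 1), ρ' u * v u|
        ≤ ∫ u in (0:ℝ)..(r - 1), |ρ' u * v u| :=
          intervalIntegral.abs_integral_le_integral_abs hab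
      _ ≤ ∫ u in (0:ℝ)..(r - 1), φ u :=
          intervalIntegral.integral_mono_on hab hintabs hintφ hptwise
      _ ≤ M * Real.exp (-1) := hφint
  -- combine
  rw [hswap, hIBP, hv0, mul_zero, sub_zero]
  calc |ρ (r - 1) * v (r - 1) - ∫ u in (0:ℝ)..(r - 1), ρ' u * v u|
      ≤ |ρ (r - 1) * v (r - 1)| + |∫ u in (0:ℝ)..(r - 1), ρ' u * v u| := abs_sub _ _
    _ ≤ K⁻¹ * (1 / lam) + M * Real.exp (-1) := add_le_add hbnd hJ
    _ = (1 / lam) * ((1 / 2) * Real.exp (-1) * (K ^ 2)⁻¹ + K⁻¹) := by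
        rw [hMdef]; ring

/-- Integration-by-parts bound, uniform in r > 1 and λ ≥ λ₀, for
    ∫_0^{r−1} cos(λu) ρ_r(u) du with ρ_r(u) = (1−e^{−(r+u)})^{−1/2}(1−e^{−(r−u)})^{−1/2};
    one may take C = (1/λ₀)((1/2)e^{−1}(1−e^{−1})^{−2} + (1−e^{−1})^{−1}). -/
theorem stmt_13 (lam₀ : ℝ) (hlam₀ : 0 < lam₀) :
    ∃ C > 0,
      C = (1 / lam₀) * ((1 / 2) * Real.exp (-1) * ((1 - Real.exp (-1)) ^ 2)⁻¹
            + (1 - Real.exp (-1))⁻¹) ∧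
      ∀ r : ℝ, 1 < r → ∀ lam : ℝ, lam₀ ≤ lam →
        |∫ u in (0:ℝ)..(r - 1), Real.cos (lam * u) *
            ((Real.sqrt (1 - Real.exp (-(r + u))))⁻¹ *
              (Real.sqrt (1 - Real.exp (-(r - u))))⁻¹)| ≤ C := by
  have hK0 : 0 < 1 - Real.exp (-1) := by
    have : Real.exp (-1) < 1 := Real.exp_lt_one_iff.mpr (by norm_num)
    linarith
  refine ⟨_, by positivity, rfl, ?_⟩
  intro r hr lam hlam
  have hlam' : 0 < lam := lt_of_lt_of_le hlam₀ hlam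
  refine (key_bound r lam hr hlam').trans ?_
  exact mul_le_mul_of_nonneg_right (one_div_le_one_div_of_le hlam₀ hlam) (by positivity)
end

section
/- Let 0 < σ ≤ t, let C ≥ 0, let χ : [0,∞) → [0,1] be measurable, and let J : [t−σ, t] → ℝ be measurable with |J(r)| ≤ C·e^{−r/2} for all r ∈ [t−σ, t]. Then |2·√(2/cosh t) · ∫_{t−σ}^{t} (χ(r) − 1) · sinh r · J(r) dr| ≤ 4·C·(1 − e^{−σ/2}). -/
/-- Bound on the error term δh_{t,σ} between the smoothed and sharp Selberg transforms. -/
theorem stmt_15 (σ t C : ℝ) (hσ : 0 < σ) (hσt : σ ≤ t) (hC : 0 ≤ C)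
    (χ : ℝ → ℝ) (hχm : Measurable χ) (hχ : ∀ x, 0 ≤ χ x ∧ χ x ≤ 1)
    (J : ℝ → ℝ) (hJm : Measurable J)
    (hJ : ∀ r ∈ Set.Icc (t - σ) t, |J r| ≤ C * Real.exp (-r / 2)) :
    |2 * Real.sqrt (2 / Real.cosh t) *
        ∫ r in (t - σ)..t, (χ r - 1) * Real.sinh r * J r|
      ≤ 4 * C * (1 - Real.exp (-σ / 2)) := by
  have hab : t - σ ≤ t := by linarith
  -- bound on the integral
  have hInt : |∫ r in (t - σ)..t, (χ r - 1) * Real.sinh r * J r|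
      ≤ ∫ r in (t - σ)..t, (C / 2) * Real.exp (r / 2) := by
    have hg : IntervalIntegrable (fun r => (C / 2) * Real.exp (r / 2)) MeasureTheory.volume
        (t - σ) t := by
      apply Continuous.intervalIntegrable
      continuity
    rw [← Real.norm_eq_abs]
    have habs : |∫ r in (t - σ)..t, (C / 2) * Real.exp (r / 2)|
        = ∫ r in (t - σ)..t, (C / 2) * Real.exp (r / 2) := by
      refine abs_of_nonneg (intervalIntegral.integral_nonneg hab fun u _ => ?_)
      positivity
    rw [← habs]
    refine intervalIntegral.norm_integral_le_abs_of_norm_le ?_ hg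
    rw [MeasureTheory.ae_restrict_iff' measurableSet_uIoc]
    refine MeasureTheory.ae_of_all _ fun r hr => ?_
    rw [Set.uIoc_of_le hab] at hr
    have hr' : r ∈ Set.Icc (t - σ) t := ⟨le_of_lt hr.1, hr.2⟩
    have h1 : |χ r - 1| ≤ 1 := by
      have := (hχ r).1; have := (hχ r).2
      rw [abs_le]; constructor <;> linarith
    have hr0 : 0 ≤ r := by linarith [hr'.1]
    have hs : |Real.sinh r| ≤ Real.exp r / 2 := by
      rw [abs_of_nonneg (Real.sinh_nonneg_iff.2 hr0), Real.sinh_eq]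
      have := Real.exp_pos (-r)
      linarith
    have hJr := hJ r hr'
    calc ‖(χ r - 1) * Real.sinh r * J r‖
        = |χ r - 1| * |Real.sinh r| * |J r| := by
          rw [Real.norm_eq_abs, abs_mul, abs_mul]
      _ ≤ 1 * (Real.exp r / 2) * (C * Real.exp (-r / 2)) := by
          apply mul_le_mul (mul_le_mul h1 hs (abs_nonneg _) zero_le_one) hJr (abs_nonneg _)
          positivity
      _ = C / 2 * Real.exp (r / 2) := by
          have hx : Real.exp r * Real.exp (-r / 2) = Real.exp (r / 2) := by
            rw [← Real.exp_add]; congr 1; ring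
          linear_combination (C / 2) * hx
  -- compute the integral of exp(r/2)
  have hcalc : ∫ r in (t - σ)..t, (C / 2) * Real.exp (r / 2)
      = C * (Real.exp (t / 2) - Real.exp ((t - σ) / 2)) := by
    rw [intervalIntegral.integral_const_mul]
    have : ∫ r in (t - σ)..t, Real.exp (r / 2)
        = 2 * (Real.exp (t / 2) - Real.exp ((t - σ) / 2)) := by
      have h := intervalIntegral.integral_comp_div (a := t - σ) (b := t)
        (c := 2) (f := Real.exp) two_ne_zero
      rw [h, integral_exp, smul_eq_mul]
    rw [this]; ring
  -- bound on the prefactor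
  have hcosh : Real.exp t / 2 ≤ Real.cosh t := by
    rw [Real.cosh_eq]
    have := (Real.exp_pos (-t)).le
    linarith
  have hcpos : 0 < Real.cosh t := Real.cosh_pos t
  have hsq : Real.sqrt (2 / Real.cosh t) ≤ 2 * Real.exp (-t / 2) := by
    have h4 : 2 / Real.cosh t ≤ 4 * Real.exp (-t) := by
      rw [div_le_iff₀ hcpos]
      have het := Real.exp_pos t
      have hmul : Real.exp (-t) * Real.exp t = 1 := by
        rw [← Real.exp_add]; simp
      nlinarith [mul_le_mul_of_nonneg_left hcosh (by positivity : (0:ℝ) ≤ 4 * Real.exp (-t))]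
    calc Real.sqrt (2 / Real.cosh t) ≤ Real.sqrt (4 * Real.exp (-t)) := Real.sqrt_le_sqrt h4
      _ = 2 * Real.exp (-t / 2) := by
          rw [show (4:ℝ) * Real.exp (-t) = (2 * Real.exp (-t / 2))^2 by
            rw [mul_pow, show Real.exp (-t / 2) ^ 2 = Real.exp (-t) by
              rw [sq, ← Real.exp_add]; congr 1; ring]
            norm_num]
          exact Real.sqrt_sq (by positivity)
  have hIntNN : 0 ≤ C * (Real.exp (t / 2) - Real.exp ((t - σ) / 2)) := by
    have : Real.exp ((t - σ) / 2) ≤ Real.exp (t / 2) := Real.exp_le_exp.2 (by linarith)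
    nlinarith
  calc |2 * Real.sqrt (2 / Real.cosh t) * ∫ r in (t - σ)..t, (χ r - 1) * Real.sinh r * J r|
      = 2 * Real.sqrt (2 / Real.cosh t) *
        |∫ r in (t - σ)..t, (χ r - 1) * Real.sinh r * J r| := by
        rw [abs_mul, abs_of_nonneg (by positivity)]
    _ ≤ 2 * (2 * Real.exp (-t / 2)) * (C * (Real.exp (t / 2) - Real.exp ((t - σ) / 2))) := by
        apply mul_le_mul (by nlinarith [Real.sqrt_nonneg (2 / Real.cosh t)])
          (hcalc ▸ hInt) (abs_nonneg _) (by positivity)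
    _ = 4 * C * (1 - Real.exp (-σ / 2)) := by
        have e1 : Real.exp (-t / 2) * Real.exp (t / 2) = 1 := by
          rw [← Real.exp_add, show -t / 2 + t / 2 = (0:ℝ) by ring, Real.exp_zero]
        have e2 : Real.exp (-t / 2) * Real.exp ((t - σ) / 2) = Real.exp (-σ / 2) := by
          rw [← Real.exp_add]; congr 1; ring
        linear_combination (4 * C) * e1 - (4 * C) * e2
end
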